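/- Let (x_1,f_1),...,(x_m,f_m) be an eluder witnessing sequence with respect to f* (i.e., f_i(x_i) ≠ f*(x_i) and f_i(x_j) = f*(x_j) for all j < i, for sign-valued functions). Color the edge {i,j} of K_m (for j < i) red if f_j(x_i) = f*(x_i) and blue otherwise. Then every red clique {i_1 < ... < i_k} yields a subsequence (x_{i_1},f_{i_1}),...,(x_{i_k},f_{i_k}) witnessing the star number condition (f_{i_r}(x_{i_r}) ≠ f*(x_{i_r}) and f_{i_r}(x_{i_s}) = f*(x_{i_s}) for all s ≠ r), and every blue clique yields a subsequence witnessing the threshold condition (f_{i_r}(x_{i_s}) ≠ f*(x_{i_s}) for s ≥ r and f_{i_r}(x_{i_s}) = f*(x_{i_s}) for s < r). -/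
import Mathlib

/-- The combinatorial core of the Ramsey argument: coloring edge `{j, i}` (`j < i`) of
`K_m` red if `f j (x i) = f* (x i)` and blue otherwise, every red clique of an eluder
witnessing sequence yields a star witnessing subsequence, and every blue clique yields
a threshold witnessing subsequence. -/
theorem stmt_12 {X : Type*} (fstar : X → ℤ) (m : ℕ)
    (x : Fin m → X) (f : Fin m → X → ℤ)
    (hsign : ∀ i : Fin m, ∀ y, f i y = 1 ∨ f i y = -1)
    (hsignstar : ∀ y, fstar y = 1 ∨ fstar y = -1)
    (heluder : ∀ i : Fin m, f i (x i) ≠ fstar (x i) ∧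
      ∀ j : Fin m, j < i → f i (x j) = fstar (x j))
    (k : ℕ) (ι : Fin k → Fin m) (hι : StrictMono ι) :
    ((∀ r s : Fin k, r < s → f (ι r) (x (ι s)) = fstar (x (ι s))) →
      ∀ r : Fin k, f (ι r) (x (ι r)) ≠ fstar (x (ι r)) ∧
        ∀ s : Fin k, s ≠ r → f (ι r) (x (ι s)) = fstar (x (ι s))) ∧
    ((∀ r s : Fin k, r < s → f (ι r) (x (ι s)) ≠ fstar (x (ι s))) →
      ∀ r : Fin k,
        (∀ s : Fin k, r ≤ s → f (ι r) (x (ι s)) ≠ fstar (x (ι s))) ∧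
        ∀ s : Fin k, s < r → f (ι r) (x (ι s)) = fstar (x (ι s))) := by
  constructor
  · intro hred r
    refine ⟨(heluder (ι r)).1, fun s hs => ?_⟩
    rcases lt_or_gt_of_ne hs with h | h
    · exact (heluder (ι r)).2 _ (hι h)
    · exact hred r s h
  · intro hblue r
    refine ⟨fun s hs => ?_, fun s hs => (heluder (ι r)).2 _ (hι hs)⟩
    rcases eq_or_lt_of_le hs with h | h
    · rw [← h]; exact (heluder (ι r)).1
    · exact hblue r s h
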